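/- Let A → B and A → A' be non-expansive homomorphisms of seminormed commutative rings, and let B' = B ⊗_A A' carry the tensor seminorm. Then the canonical base-change isomorphism Ω_{B/A} ⊗_B B' → Ω_{B'/A'} is an isometric isomorphism, where the source carries the tensor seminorm of the Kähler seminorm on Ω_{B/A} and the seminorm of B', and the target carries the Kähler seminorm of B' over A'. -/

import Mathlib

open scoped NNReal TensorProduct

attribute [local instance] Algebra.TensorProduct.rightAlgebra

/-- A (nonarchimedean) seminorm on an additive group. -/
def IsGroupSeminorm {M : Type*} [AddCommGroup M] (f : M → ℝ≥0) : Prop :=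
  f 0 = 0 ∧ ∀ x y : M, f (x - y) ≤ max (f x) (f y)

/-- A seminorm on a commutative ring. -/
def IsRingSeminorm {A : Type*} [CommRing A] (f : A → ℝ≥0) : Prop :=
  IsGroupSeminorm f ∧ f 1 = 1 ∧ ∀ x y : A, f (x * y) ≤ f x * f y

/-- The Kähler seminorm on `Ω[B⁄A]` induced by a seminorm `vB` on `B`. -/
noncomputable def kahlerSeminorm (A B : Type*) [CommRing A] [CommRing B] [Algebra A B]
    (vB : B → ℝ≥0) (x : Ω[B⁄A]) : ℝ≥0 :=
  sInf { r | ∃ (n : ℕ) (c b : Fin n → B),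
    x = ∑ i, c i • KaehlerDifferential.D A B (b i) ∧
    r = Finset.univ.sup fun i => vB (c i) * vB (b i) }

/-- The tensor seminorm on `M ⊗[A] N`. -/
noncomputable def tensorSeminorm (A M N : Type*) [CommRing A] [AddCommGroup M] [Module A M]
    [AddCommGroup N] [Module A N] (vM : M → ℝ≥0) (vN : N → ℝ≥0)
    (x : TensorProduct A M N) : ℝ≥0 :=
  sInf { r | ∃ (n : ℕ) (m : Fin n → M) (w : Fin n → N),
    x = ∑ i, m i ⊗ₜ[A] w i ∧
    r = Finset.univ.sup fun i => vM (m i) * vN (w i) }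

lemma sup_comp_equiv {α β : Type*} [Fintype α] [Fintype β] (e : α ≃ β) (f : β → ℝ≥0) :
    (Finset.univ.sup fun a => f (e a)) = Finset.univ.sup f := by
  apply le_antisymm
  · exact Finset.sup_le fun a _ => Finset.le_sup (Finset.mem_univ (e a))
  · refine Finset.sup_le fun b _ => ?_
    simpa using Finset.le_sup (f := fun a => f (e a)) (Finset.mem_univ (e.symm b))

lemma le_mul_sInf {c x : ℝ≥0} {S : Set ℝ≥0} (hS : S.Nonempty) (h : ∀ s ∈ S, x ≤ c * s) :
    x ≤ c * sInf S := by
  rcases eq_or_ne c 0 with rfl | hc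
  · obtain ⟨s, hs⟩ := hS
    simpa using h s hs
  · have : x / c ≤ sInf S := le_csInf hS fun s hs => by
      rw [div_le_iff₀ (pos_iff_ne_zero.2 hc)]
      rw [mul_comm]; exact h s hs
    calc x = c * (x / c) := by rw [mul_div_cancel₀ _ hc]
    _ ≤ c * sInf S := mul_le_mul_right this c

lemma tensor_rep_mem {A M N : Type*} [CommRing A] [AddCommGroup M] [Module A M]
    [AddCommGroup N] [Module A N] (vM : M → ℝ≥0) (vN : N → ℝ≥0)
    {ι : Type*} [Fintype ι] (m : ι → M) (w : ι → N) :
    (Finset.univ.sup fun i => vM (m i) * vN (w i)) ∈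
      { r | ∃ (n : ℕ) (m' : Fin n → M) (w' : Fin n → N),
        (∑ i, m i ⊗ₜ[A] w i) = ∑ i, m' i ⊗ₜ[A] w' i ∧
        r = Finset.univ.sup fun i => vM (m' i) * vN (w' i) } := by
  refine ⟨Fintype.card ι, m ∘ (Fintype.equivFin ι).symm, w ∘ (Fintype.equivFin ι).symm, ?_, ?_⟩
  · exact (Equiv.sum_comp (Fintype.equivFin ι).symm fun i => m i ⊗ₜ[A] w i).symm
  · exact (sup_comp_equiv (Fintype.equivFin ι).symm fun i => vM (m i) * vN (w i)).symm

lemma tensorSeminorm_le_sup {A M N : Type*} [CommRing A] [AddCommGroup M] [Module A M]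
    [AddCommGroup N] [Module A N] (vM : M → ℝ≥0) (vN : N → ℝ≥0)
    {ι : Type*} [Fintype ι] (m : ι → M) (w : ι → N) :
    tensorSeminorm A M N vM vN (∑ i, m i ⊗ₜ[A] w i) ≤
      Finset.univ.sup fun i => vM (m i) * vN (w i) :=
  csInf_le (OrderBot.bddBelow _) (tensor_rep_mem vM vN m w)

lemma tensor_set_nonempty {A M N : Type*} [CommRing A] [AddCommGroup M] [Module A M]
    [AddCommGroup N] [Module A N] (vM : M → ℝ≥0) (vN : N → ℝ≥0) (x : TensorProduct A M N) :
    { r | ∃ (n : ℕ) (m' : Fin n → M) (w' : Fin n → N),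
        x = ∑ i, m' i ⊗ₜ[A] w' i ∧
        r = Finset.univ.sup fun i => vM (m' i) * vN (w' i) }.Nonempty := by
  obtain ⟨s, hs⟩ := TensorProduct.exists_finset x
  have hx : x = ∑ i : s, (i : M × N).1 ⊗ₜ[A] (i : M × N).2 := by
    rw [hs, Finset.sum_coe_sort s fun i => i.1 ⊗ₜ[A] i.2]
  obtain ⟨n, m', w', h1, h2⟩ := tensor_rep_mem (A := A) vM vN
    (fun i : s => (i : M × N).1) (fun i : s => (i : M × N).2)
  exact ⟨_, n, m', w', hx.trans h1, h2⟩

lemma kahler_rep_mem {A B : Type*} [CommRing A] [CommRing B] [Algebra A B]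
    (vB : B → ℝ≥0) {ι : Type*} [Fintype ι] (c b : ι → B) :
    (Finset.univ.sup fun i => vB (c i) * vB (b i)) ∈
      { r | ∃ (n : ℕ) (c' b' : Fin n → B),
        (∑ i, c i • KaehlerDifferential.D A B (b i))
          = ∑ i, c' i • KaehlerDifferential.D A B (b' i) ∧
        r = Finset.univ.sup fun i => vB (c' i) * vB (b' i) } := by
  refine ⟨Fintype.card ι, c ∘ (Fintype.equivFin ι).symm, b ∘ (Fintype.equivFin ι).symm, ?_, ?_⟩
  · exact (Equiv.sum_comp (Fintype.equivFin ι).symm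
      fun i => c i • KaehlerDifferential.D A B (b i)).symm
  · exact (sup_comp_equiv (Fintype.equivFin ι).symm fun i => vB (c i) * vB (b i)).symm

lemma kahlerSeminorm_le_sup {A B : Type*} [CommRing A] [CommRing B] [Algebra A B]
    (vB : B → ℝ≥0) {ι : Type*} [Fintype ι] (c b : ι → B) :
    kahlerSeminorm A B vB (∑ i, c i • KaehlerDifferential.D A B (b i)) ≤
      Finset.univ.sup fun i => vB (c i) * vB (b i) :=
  csInf_le (OrderBot.bddBelow _) (kahler_rep_mem vB c b)

lemma kahler_set_nonempty {A B : Type*} [CommRing A] [CommRing B] [Algebra A B]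
    (vB : B → ℝ≥0) (x : Ω[B⁄A]) :
    { r | ∃ (n : ℕ) (c b : Fin n → B),
        x = ∑ i, c i • KaehlerDifferential.D A B (b i) ∧
        r = Finset.univ.sup fun i => vB (c i) * vB (b i) }.Nonempty := by
  have hx : x ∈ Submodule.span B (Set.range (KaehlerDifferential.D A B)) := by
    rw [KaehlerDifferential.span_range_derivation]; trivial
  obtain ⟨n, f, g, hfg⟩ := Submodule.mem_span_set'.1 hx
  choose b hb using fun i => (g i).2
  refine ⟨_, n, f, b, ?_, rfl⟩
  rw [← hfg]
  exact Finset.sum_congr rfl fun i _ => by rw [hb i]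

lemma NNReal.le_of_forall_pos_le_add' {a b : ℝ≥0} (h : ∀ ε : ℝ≥0, 0 < ε → a ≤ b + ε) : a ≤ b := by
  by_contra hab
  push_neg at hab
  have hpos : 0 < a - b := tsub_pos_of_lt hab
  have h2 := h ((a - b) / 2) (by positivity)
  have h3 : b + (a - b) / 2 < b + (a - b) := by
    exact add_lt_add_right (NNReal.half_lt_self (ne_of_gt hpos)) b
  rw [add_tsub_cancel_of_le hab.le] at h3
  exact absurd (h2.trans_lt h3) (lt_irrefl a)
section Helpers

variable {A B A' : Type*} [CommRing A] [CommRing B] [CommRing A']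
    [Algebra A B] [Algebra A A'] (vB : B → ℝ≥0) (vA' : A' → ℝ≥0)

lemma tensorSeminorm_tmul_one_le (h1 : vA' 1 = 1) (b : B) :
    tensorSeminorm A B A' vB vA' (b ⊗ₜ[A] (1 : A')) ≤ vB b := by
  have h : b ⊗ₜ[A] (1:A') = ∑ _i : Fin 1, b ⊗ₜ[A] (1:A') := by simp
  rw [h]
  refine (tensorSeminorm_le_sup vB vA' _ _).trans ?_
  simp [h1]

lemma kahlerSeminorm_D_le (h1 : vB 1 = 1) (b : B) :
    kahlerSeminorm A B vB (KaehlerDifferential.D A B b) ≤ vB b := by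
  have h : KaehlerDifferential.D A B b
      = ∑ _i : Fin 1, (1:B) • KaehlerDifferential.D A B b := by simp
  rw [h]
  refine (kahlerSeminorm_le_sup vB _ _).trans ?_
  simp [h1]

lemma tensorSeminorm_mul_tmul_one_le (hBm : ∀ x y, vB (x*y) ≤ vB x * vB y)
    (y : TensorProduct A B A') (c : B) :
    tensorSeminorm A B A' vB vA' (y * (c ⊗ₜ[A] (1:A')))
      ≤ vB c * tensorSeminorm A B A' vB vA' y := by
  refine le_mul_sInf (tensor_set_nonempty vB vA' y) ?_
  rintro s ⟨n, m, w, rfl, rfl⟩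
  have h : (∑ i, m i ⊗ₜ[A] w i) * (c ⊗ₜ[A] (1:A')) = ∑ i, (c * m i) ⊗ₜ[A] (w i) := by
    rw [Finset.sum_mul]
    exact Finset.sum_congr rfl fun i _ => by
      rw [Algebra.TensorProduct.tmul_mul_tmul, mul_comm (m i) c, mul_one]
  rw [h]
  refine (tensorSeminorm_le_sup vB vA' _ _).trans (Finset.sup_le fun i _ => ?_)
  calc vB (c * m i) * vA' (w i) ≤ (vB c * vB (m i)) * vA' (w i) :=
        mul_le_mul_left (hBm c (m i)) _
    _ = vB c * (vB (m i) * vA' (w i)) := mul_assoc _ _ _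
    _ ≤ vB c * Finset.univ.sup (fun i => vB (m i) * vA' (w i)) :=
        mul_le_mul_right (Finset.le_sup (f := fun i => vB (m i) * vA' (w i))
          (Finset.mem_univ i)) _

lemma tensorSeminorm_mul_one_tmul_le (hA'm : ∀ x y, vA' (x*y) ≤ vA' x * vA' y)
    (y : TensorProduct A B A') (a : A') :
    tensorSeminorm A B A' vB vA' (y * ((1:B) ⊗ₜ[A] a))
      ≤ vA' a * tensorSeminorm A B A' vB vA' y := by
  refine le_mul_sInf (tensor_set_nonempty vB vA' y) ?_
  rintro s ⟨n, m, w, rfl, rfl⟩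
  have h : (∑ i, m i ⊗ₜ[A] w i) * ((1:B) ⊗ₜ[A] a) = ∑ i, (m i) ⊗ₜ[A] (w i * a) := by
    rw [Finset.sum_mul]
    exact Finset.sum_congr rfl fun i _ => by
      rw [Algebra.TensorProduct.tmul_mul_tmul, mul_one]
  rw [h]
  refine (tensorSeminorm_le_sup vB vA' _ _).trans (Finset.sup_le fun i _ => ?_)
  calc vB (m i) * vA' (w i * a) ≤ vB (m i) * (vA' (w i) * vA' a) :=
        mul_le_mul_right (hA'm (w i) a) _
    _ = vA' a * (vB (m i) * vA' (w i)) := by ring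
    _ ≤ vA' a * Finset.univ.sup (fun i => vB (m i) * vA' (w i)) :=
        mul_le_mul_right (Finset.le_sup (f := fun i => vB (m i) * vA' (w i))
          (Finset.mem_univ i)) _

attribute [local instance] Algebra.TensorProduct.rightAlgebra in
lemma D_tmul_eq (b : B) (a : A') :
    KaehlerDifferential.D A' (TensorProduct A B A') (b ⊗ₜ[A] a)
      = ((1:B) ⊗ₜ[A] a) • KaehlerDifferential.D A' (TensorProduct A B A') (b ⊗ₜ[A] (1:A')) := by
  have halg : algebraMap A' (TensorProduct A B A') a = (1:B) ⊗ₜ[A] a := rfl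
  have h1 : (b ⊗ₜ[A] a) = (b ⊗ₜ[A] (1:A')) * (algebraMap A' (TensorProduct A B A') a) := by
    rw [halg, Algebra.TensorProduct.tmul_mul_tmul, mul_one, one_mul]
  rw [h1, Derivation.leibniz, Derivation.map_algebraMap, smul_zero, zero_add, halg]

end Helpers
/-- Base change of Kähler seminorms: given non-expansive homomorphisms `A → B`, `A → A'` of
seminormed rings and `B' = B ⊗_A A'` with the tensor seminorm, the canonical base-change
isomorphism `Ω_{B/A} ⊗_B B' ≅ Ω_{B'/A'}` (characterized by `(c • d b) ⊗ x ↦ (x * (c ⊗ 1)) •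
d (b ⊗ 1)`) is an isometric isomorphism for the tensor seminorm on the source (of the Kähler
seminorm of `Ω_{B/A}` and the tensor seminorm of `B'`) and the Kähler seminorm on the target. -/
theorem kahlerSeminorm_base_change_isometry
    {A B A' : Type*} [CommRing A] [CommRing B] [CommRing A']
    [Algebra A B] [Algebra A A']
    (vA : A → ℝ≥0) (vB : B → ℝ≥0) (vA' : A' → ℝ≥0)
    (hA : IsRingSeminorm vA) (hB : IsRingSeminorm vB) (hA' : IsRingSeminorm vA')
    (hAB : ∀ a : A, vB (algebraMap A B a) ≤ vA a)
    (hAA' : ∀ a : A, vA' (algebraMap A A' a) ≤ vA a)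
    (Φ : TensorProduct B (Ω[B⁄A]) (TensorProduct A B A') ≃+ Ω[(TensorProduct A B A')⁄A'])
    (hΦ : ∀ (c b : B) (x : TensorProduct A B A'),
      Φ ((c • KaehlerDifferential.D A B b) ⊗ₜ[B] x)
        = (x * (c ⊗ₜ[A] (1 : A'))) •
            KaehlerDifferential.D A' (TensorProduct A B A') (b ⊗ₜ[A] (1 : A'))) :
    ∀ x : TensorProduct B (Ω[B⁄A]) (TensorProduct A B A'),
      kahlerSeminorm A' (TensorProduct A B A') (tensorSeminorm A B A' vB vA') (Φ x)
        = tensorSeminorm B (Ω[B⁄A]) (TensorProduct A B A')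
            (kahlerSeminorm A B vB) (tensorSeminorm A B A' vB vA') x := by

  obtain ⟨⟨_hB0, _hBd⟩, hB1, hBm⟩ := hB
  obtain ⟨⟨_hA'0, _hA'd⟩, hA'1, hA'm⟩ := hA'
  intro x
  apply le_antisymm
  · -- kahler seminorm of Φ x ≤ tensor seminorm of x
    refine le_csInf (tensor_set_nonempty _ _ x) ?_
    rintro s ⟨n, ω, y, hx, rfl⟩
    refine NNReal.le_of_forall_pos_le_add' fun ε hε => ?_
    have key : ∀ i : Fin n, ∃ (m : ℕ) (c b : Fin m → B),
        ω i = ∑ j, c j • KaehlerDifferential.D A B (b j) ∧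
        (Finset.univ.sup fun j => vB (c j) * vB (b j))
          ≤ kahlerSeminorm A B vB (ω i)
            + ε / (tensorSeminorm A B A' vB vA' (y i) + 1) := by
      intro i
      have hpos : (0:ℝ≥0) < ε / (tensorSeminorm A B A' vB vA' (y i) + 1) :=
        div_pos hε (by positivity)
      obtain ⟨r, hr, hlt⟩ := exists_lt_of_csInf_lt (kahler_set_nonempty vB (ω i))
        (lt_add_of_pos_right _ hpos)
      obtain ⟨m, c, b, h1, rfl⟩ := hr
      exact ⟨m, c, b, h1, hlt.le⟩
    choose m c b hrep hsup using key
    have hΦsum : ∀ {ι : Type} (s : Finset ι)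
        (g : ι → TensorProduct B (Ω[B⁄A]) (TensorProduct A B A')),
        Φ (∑ i ∈ s, g i) = ∑ i ∈ s, Φ (g i) := by
      intro ι s g
      exact map_sum Φ.toAddMonoidHom g s
    have hx2 : Φ x = ∑ p : (Σ i : Fin n, Fin (m i)),
        ((y p.1 * (c p.1 p.2 ⊗ₜ[A] (1:A'))) •
          KaehlerDifferential.D A' (TensorProduct A B A') (b p.1 p.2 ⊗ₜ[A] (1:A'))) := by
      have h1 : Φ x = ∑ i, ∑ j, ((y i * (c i j ⊗ₜ[A] (1:A'))) •
          KaehlerDifferential.D A' (TensorProduct A B A') (b i j ⊗ₜ[A] (1:A'))) := by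
        rw [hx, hΦsum]
        refine Finset.sum_congr rfl fun i _ => ?_
        rw [hrep i, TensorProduct.sum_tmul, hΦsum]
        exact Finset.sum_congr rfl fun j _ => hΦ (c i j) (b i j) (y i)
      rw [h1, Finset.sum_sigma', Finset.univ_sigma_univ]
    rw [hx2]
    refine (kahlerSeminorm_le_sup (tensorSeminorm A B A' vB vA')
      (fun p : (Σ i : Fin n, Fin (m i)) => y p.1 * (c p.1 p.2 ⊗ₜ[A] (1:A')))
      (fun p : (Σ i : Fin n, Fin (m i)) => b p.1 p.2 ⊗ₜ[A] (1:A'))).trans ?_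
    refine Finset.sup_le fun p _ => ?_
    obtain ⟨i, j⟩ := p
    have hd : ε / (tensorSeminorm A B A' vB vA' (y i) + 1)
        * tensorSeminorm A B A' vB vA' (y i) ≤ ε := by
      calc ε / (tensorSeminorm A B A' vB vA' (y i) + 1)
            * tensorSeminorm A B A' vB vA' (y i)
          ≤ ε / (tensorSeminorm A B A' vB vA' (y i) + 1)
            * (tensorSeminorm A B A' vB vA' (y i) + 1) :=
            mul_le_mul_right (le_add_of_nonneg_right zero_le) _
        _ = ε := div_mul_cancel₀ _ (by positivity)
    calc tensorSeminorm A B A' vB vA' (y i * (c i j ⊗ₜ[A] (1:A')))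
          * tensorSeminorm A B A' vB vA' (b i j ⊗ₜ[A] (1:A'))
        ≤ (vB (c i j) * tensorSeminorm A B A' vB vA' (y i)) * vB (b i j) :=
          mul_le_mul' (tensorSeminorm_mul_tmul_one_le vB vA' hBm (y i) (c i j))
            (tensorSeminorm_tmul_one_le vB vA' hA'1 (b i j))
      _ = (vB (c i j) * vB (b i j)) * tensorSeminorm A B A' vB vA' (y i) := by ring
      _ ≤ (Finset.univ.sup fun j => vB (c i j) * vB (b i j))
            * tensorSeminorm A B A' vB vA' (y i) :=
          mul_le_mul_left (Finset.le_sup (f := fun j => vB (c i j) * vB (b i j))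
            (Finset.mem_univ j)) _
      _ ≤ (kahlerSeminorm A B vB (ω i)
              + ε / (tensorSeminorm A B A' vB vA' (y i) + 1))
            * tensorSeminorm A B A' vB vA' (y i) :=
          mul_le_mul_left (hsup i) _
      _ = kahlerSeminorm A B vB (ω i) * tensorSeminorm A B A' vB vA' (y i)
            + ε / (tensorSeminorm A B A' vB vA' (y i) + 1)
              * tensorSeminorm A B A' vB vA' (y i) := add_mul _ _ _
      _ ≤ (Finset.univ.sup fun i => kahlerSeminorm A B vB (ω i)
              * tensorSeminorm A B A' vB vA' (y i)) + ε :=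
          add_le_add (Finset.le_sup (f := fun i => kahlerSeminorm A B vB (ω i)
            * tensorSeminorm A B A' vB vA' (y i)) (Finset.mem_univ i)) hd
  · -- tensor seminorm of x ≤ kahler seminorm of Φ x
    refine le_csInf (kahler_set_nonempty _ (Φ x)) ?_
    rintro t ⟨n, c', b', hΦx, rfl⟩
    refine NNReal.le_of_forall_pos_le_add' fun ε hε => ?_
    have key : ∀ i : Fin n, ∃ (m : ℕ) (bb : Fin m → B) (aa : Fin m → A'),
        b' i = ∑ j, bb j ⊗ₜ[A] aa j ∧
        (Finset.univ.sup fun j => vB (bb j) * vA' (aa j))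
          ≤ tensorSeminorm A B A' vB vA' (b' i)
            + ε / (tensorSeminorm A B A' vB vA' (c' i) + 1) := by
      intro i
      have hpos : (0:ℝ≥0) < ε / (tensorSeminorm A B A' vB vA' (c' i) + 1) :=
        div_pos hε (by positivity)
      obtain ⟨r, hr, hlt⟩ := exists_lt_of_csInf_lt (tensor_set_nonempty vB vA' (b' i))
        (lt_add_of_pos_right _ hpos)
      obtain ⟨m, bb, aa, h1, rfl⟩ := hr
      exact ⟨m, bb, aa, h1, hlt.le⟩
    choose m bb aa hrep hsup using key
    have hsymm : ∀ (bv : B) (y : TensorProduct A B A'),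
        Φ.symm (y • KaehlerDifferential.D A' (TensorProduct A B A') (bv ⊗ₜ[A] (1:A')))
          = (KaehlerDifferential.D A B bv) ⊗ₜ[B] y := by
      intro bv y
      have h := hΦ 1 bv y
      rw [one_smul, ← Algebra.TensorProduct.one_def, mul_one] at h
      exact (AddEquiv.symm_apply_eq Φ).2 h.symm
    have hterm : ∀ i : Fin n, c' i • KaehlerDifferential.D A' (TensorProduct A B A') (b' i)
        = ∑ j, (c' i * ((1:B) ⊗ₜ[A] aa i j)) •
            KaehlerDifferential.D A' (TensorProduct A B A') (bb i j ⊗ₜ[A] (1:A')) := by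
      intro i
      rw [hrep i, map_sum, Finset.smul_sum]
      refine Finset.sum_congr rfl fun j _ => ?_
      rw [D_tmul_eq, smul_smul]
    have hx2 : x = ∑ p : (Σ i : Fin n, Fin (m i)),
        (KaehlerDifferential.D A B (bb p.1 p.2)) ⊗ₜ[B]
          (c' p.1 * ((1:B) ⊗ₜ[A] aa p.1 p.2)) := by
      have h1 : Φ x = ∑ p : (Σ i : Fin n, Fin (m i)),
          (c' p.1 * ((1:B) ⊗ₜ[A] aa p.1 p.2)) •
            KaehlerDifferential.D A' (TensorProduct A B A') (bb p.1 p.2 ⊗ₜ[A] (1:A')) := by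
        have h0 : Φ x = ∑ i, ∑ j, (c' i * ((1:B) ⊗ₜ[A] aa i j)) •
            KaehlerDifferential.D A' (TensorProduct A B A') (bb i j ⊗ₜ[A] (1:A')) := by
          rw [hΦx]
          exact Finset.sum_congr rfl fun i _ => hterm i
        rw [h0, Finset.sum_sigma', Finset.univ_sigma_univ]
      have hsum2 : Φ.symm (∑ p : (Σ i : Fin n, Fin (m i)),
          (c' p.1 * ((1:B) ⊗ₜ[A] aa p.1 p.2)) •
            KaehlerDifferential.D A' (TensorProduct A B A') (bb p.1 p.2 ⊗ₜ[A] (1:A')))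
          = ∑ p : (Σ i : Fin n, Fin (m i)), Φ.symm ((c' p.1 * ((1:B) ⊗ₜ[A] aa p.1 p.2)) •
            KaehlerDifferential.D A' (TensorProduct A B A') (bb p.1 p.2 ⊗ₜ[A] (1:A'))) :=
        map_sum Φ.symm.toAddMonoidHom _ _
      calc x = Φ.symm (Φ x) := (Φ.symm_apply_apply x).symm
        _ = _ := by
            rw [h1, hsum2]
            exact Finset.sum_congr rfl fun p _ => hsymm (bb p.1 p.2) _
    rw [hx2]
    refine (tensorSeminorm_le_sup (kahlerSeminorm A B vB) (tensorSeminorm A B A' vB vA')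
      (fun p : (Σ i : Fin n, Fin (m i)) => KaehlerDifferential.D A B (bb p.1 p.2))
      (fun p : (Σ i : Fin n, Fin (m i)) => c' p.1 * ((1:B) ⊗ₜ[A] aa p.1 p.2))).trans ?_
    refine Finset.sup_le fun p _ => ?_
    obtain ⟨i, j⟩ := p
    have hd : ε / (tensorSeminorm A B A' vB vA' (c' i) + 1)
        * tensorSeminorm A B A' vB vA' (c' i) ≤ ε := by
      calc ε / (tensorSeminorm A B A' vB vA' (c' i) + 1)
            * tensorSeminorm A B A' vB vA' (c' i)
          ≤ ε / (tensorSeminorm A B A' vB vA' (c' i) + 1)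
            * (tensorSeminorm A B A' vB vA' (c' i) + 1) :=
            mul_le_mul_right (le_add_of_nonneg_right zero_le) _
        _ = ε := div_mul_cancel₀ _ (by positivity)
    calc kahlerSeminorm A B vB (KaehlerDifferential.D A B (bb i j))
          * tensorSeminorm A B A' vB vA' (c' i * ((1:B) ⊗ₜ[A] aa i j))
        ≤ vB (bb i j) * (vA' (aa i j) * tensorSeminorm A B A' vB vA' (c' i)) :=
          mul_le_mul' (kahlerSeminorm_D_le vB hB1 (bb i j))
            (tensorSeminorm_mul_one_tmul_le vB vA' hA'm (c' i) (aa i j))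
      _ = (vB (bb i j) * vA' (aa i j)) * tensorSeminorm A B A' vB vA' (c' i) := by ring
      _ ≤ (Finset.univ.sup fun j => vB (bb i j) * vA' (aa i j))
            * tensorSeminorm A B A' vB vA' (c' i) :=
          mul_le_mul_left (Finset.le_sup (f := fun j => vB (bb i j) * vA' (aa i j))
            (Finset.mem_univ j)) _
      _ ≤ (tensorSeminorm A B A' vB vA' (b' i)
              + ε / (tensorSeminorm A B A' vB vA' (c' i) + 1))
            * tensorSeminorm A B A' vB vA' (c' i) :=
          mul_le_mul_left (hsup i) _
      _ = tensorSeminorm A B A' vB vA' (c' i) * tensorSeminorm A B A' vB vA' (b' i)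
            + ε / (tensorSeminorm A B A' vB vA' (c' i) + 1)
              * tensorSeminorm A B A' vB vA' (c' i) := by ring
      _ ≤ (Finset.univ.sup fun i => tensorSeminorm A B A' vB vA' (c' i)
              * tensorSeminorm A B A' vB vA' (b' i)) + ε :=
          add_le_add (Finset.le_sup (f := fun i => tensorSeminorm A B A' vB vA' (c' i)
            * tensorSeminorm A B A' vB vA' (b' i)) (Finset.mem_univ i)) hd
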